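/- Let A be a binary (0/1) random variable and G a finitely supported random variable whose joint probability mass function satisfies f(a,g) = c·f(a|g=0)·f(g|a=0)·exp{φ_g(g)·a} for a normalizing constant c>0, where f(a|g=0) and f(g|a=0) are the conditional pmfs given {G=0} and {A=0} respectively and φ_g is a real-valued function with φ_g(0)=0. Then for any functions t_1 of A and t_2 of G, with t(A,G)=t_1(A)+t_2(G), E[ t(A,G)·{G−E(G|A=0)}·{A−E(A|G=0)}·exp{−φ_g(G)·A} ] = 0. -/

import Mathlib

open MeasureTheory ProbabilityTheory

/-- Conditional expectation of the real random variable `X` given the σ-algebra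
generated by the random variable `Z`. -/
noncomputable def cExp {Ω β : Type*} [MeasurableSpace Ω] [mβ : MeasurableSpace β]
    (μ : Measure Ω) (Z : Ω → β) (X : Ω → ℝ) : Ω → ℝ :=
  μ[X | MeasurableSpace.comap Z mβ]

/-- Conditional covariance `cov(X, W | Z) = E(XW|Z) - E(X|Z)E(W|Z)`. -/
noncomputable def cCov {Ω β : Type*} [MeasurableSpace Ω] [mβ : MeasurableSpace β]
    (μ : Measure Ω) (Z : Ω → β) (X W : Ω → ℝ) : Ω → ℝ :=
  fun ω => cExp μ Z (fun ω' => X ω' * W ω') ω - cExp μ Z X ω * cExp μ Z W ω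

/-- Conditional variance `var(X | Z) = E(X²|Z) - E(X|Z)²`. -/
noncomputable def cVar {Ω β : Type*} [MeasurableSpace Ω] [mβ : MeasurableSpace β]
    (μ : Measure Ω) (Z : Ω → β) (X : Ω → ℝ) : Ω → ℝ :=
  fun ω => cExp μ Z (fun ω' => X ω' ^ 2) ω - (cExp μ Z X ω) ^ 2

lemma integral_of_finRange {Ω β : Type*} [MeasurableSpace Ω] [MeasurableSpace β]
    [MeasurableSingletonClass β] (ν : Measure Ω) [IsFiniteMeasure ν] {X : Ω → β}
    (hX : Measurable X) {T : Finset β} (hT : ∀ ω, X ω ∈ T) (F : β → ℝ) :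
    ∫ ω, F (X ω) ∂ν = ∑ x ∈ T, F x * (ν {ω | X ω = x}).toReal := by
  have hmeas : ∀ x : β, MeasurableSet {ω | X ω = x} := fun x => hX (measurableSet_singleton x)
  have hfun : ∀ ω, F (X ω) = ∑ x ∈ T, Set.indicator {ω' | X ω' = x} (fun _ => F x) ω := by
    intro ω
    rw [Finset.sum_eq_single (X ω)]
    · simp [Set.indicator_of_mem, Set.mem_setOf_eq]
    · intro b _ hb
      exact Set.indicator_of_notMem (by simpa using (Ne.symm hb)) _
    · intro h; exact absurd (hT ω) h
  simp only [hfun]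
  rw [integral_finset_sum]
  · refine Finset.sum_congr rfl fun x _ => ?_
    rw [integral_indicator_const _ (hmeas x)]
    simp [mul_comm, measureReal_def]
  · intro x _
    exact (integrable_indicator_iff (hmeas x)).2 (integrableOn_const (measure_lt_top ν _).ne)

/-- key orthogonality identity in the proof of Lemma 4.3.
If the joint pmf of a binary `A` and a finitely supported `G` factorizes as
`f(a,g) = c·f(a|g=0)·f(g|a=0)·exp{φ_g(g)·a}`, then for all functions `t₁`, `t₂`, with
`t(A,G) = t₁(A) + t₂(G)`,
`E[t(A,G)·{G−E(G|A=0)}·{A−E(A|G=0)}·exp{−φ_g(G)·A}] = 0`. -/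
theorem stmt10 {Ω : Type*} [MeasurableSpace Ω] (μ : Measure Ω) [IsProbabilityMeasure μ]
    (A G : Ω → ℝ) (hAm : Measurable A) (hGm : Measurable G)
    -- A is binary (0/1) and G is finitely supported
    (hAbin : ∀ ω, A ω = 0 ∨ A ω = 1)
    (hGfin : (Set.range G).Finite)
    -- the conditioning events have positive probability
    (hA0 : μ {ω | A ω = 0} ≠ 0) (hG0 : μ {ω | G ω = 0} ≠ 0)
    (φg : ℝ → ℝ) (hφ0 : φg 0 = 0) (c : ℝ) (hc : 0 < c)
    -- joint pmf factorization: f(a,g) = c·f(a|g=0)·f(g|a=0)·exp{φ_g(g)·a}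
    (hpmf : ∀ a g : ℝ, (μ {ω | A ω = a ∧ G ω = g}).toReal =
      c * (ProbabilityTheory.cond μ {ω | G ω = 0} {ω | A ω = a}).toReal *
        (ProbabilityTheory.cond μ {ω | A ω = 0} {ω | G ω = g}).toReal *
        Real.exp (φg g * a)) :
    ∀ t₁ t₂ : ℝ → ℝ,
      ∫ ω, (t₁ (A ω) + t₂ (G ω)) *
        (G ω - ∫ ω', G ω' ∂(ProbabilityTheory.cond μ {ω'' | A ω'' = 0})) *
        (A ω - ∫ ω', A ω' ∂(ProbabilityTheory.cond μ {ω'' | G ω'' = 0})) *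
        Real.exp (-(φg (G ω) * A ω)) ∂μ = 0 := by
  intro t₁ t₂
  haveI hprobA : IsProbabilityMeasure (ProbabilityTheory.cond μ {ω | A ω = 0}) :=
    cond_isProbabilityMeasure hA0
  haveI hprobG : IsProbabilityMeasure (ProbabilityTheory.cond μ {ω | G ω = 0}) :=
    cond_isProbabilityMeasure hG0
  set TG : Finset ℝ := insert 0 hGfin.toFinset with hTGdef
  have hTG : ∀ ω, G ω ∈ TG := fun ω => Finset.mem_insert_of_mem (hGfin.mem_toFinset.2 ⟨ω, rfl⟩)
  set TA : Finset ℝ := ({0, 1} : Finset ℝ) with hTAdef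
  have hTA : ∀ ω, A ω ∈ TA := fun ω => by
    rcases hAbin ω with h | h <;> simp [hTAdef, h]
  set q : ℝ → ℝ := fun g => ((ProbabilityTheory.cond μ {ω | A ω = 0}) {ω | G ω = g}).toReal with hqdef
  set p : ℝ → ℝ := fun a => ((ProbabilityTheory.cond μ {ω | G ω = 0}) {ω | A ω = a}).toReal with hpdef
  set mG : ℝ := ∫ ω', G ω' ∂(ProbabilityTheory.cond μ {ω'' | A ω'' = 0}) with hmGdef
  set mA : ℝ := ∫ ω', A ω' ∂(ProbabilityTheory.cond μ {ω'' | G ω'' = 0}) with hmAdef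
  have hq1 : ∑ g ∈ TG, q g = 1 := by
    have h := integral_of_finRange (ProbabilityTheory.cond μ {ω | A ω = 0}) hGm hTG (fun _ => (1:ℝ))
    simpa using h.symm
  have hp1 : ∑ a ∈ TA, p a = 1 := by
    have h := integral_of_finRange (ProbabilityTheory.cond μ {ω | G ω = 0}) hAm hTA (fun _ => (1:ℝ))
    simpa using h.symm
  have hqG : ∑ g ∈ TG, g * q g = mG := by
    have h := integral_of_finRange (ProbabilityTheory.cond μ {ω | A ω = 0}) hGm hTG (fun g => g)
    exact h.symm
  have hpA : ∑ a ∈ TA, a * p a = mA := by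
    have h := integral_of_finRange (ProbabilityTheory.cond μ {ω | G ω = 0}) hAm hTA (fun a => a)
    exact h.symm
  have s2 : ∑ g ∈ TG, q g * (g - mG) = 0 := by
    have h : ∑ g ∈ TG, q g * (g - mG) = (∑ g ∈ TG, g * q g) - (∑ g ∈ TG, q g) * mG := by
      rw [Finset.sum_mul, ← Finset.sum_sub_distrib]
      exact Finset.sum_congr rfl fun g _ => by ring
    rw [h, hqG, hq1, one_mul, sub_self]
  have s3 : ∑ a ∈ TA, p a * (a - mA) = 0 := by
    have h : ∑ a ∈ TA, p a * (a - mA) = (∑ a ∈ TA, a * p a) - (∑ a ∈ TA, p a) * mA := by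
      rw [Finset.sum_mul, ← Finset.sum_sub_distrib]
      exact Finset.sum_congr rfl fun a _ => by ring
    rw [h, hpA, hp1, one_mul, sub_self]
  -- expand the main integral
  set F : ℝ × ℝ → ℝ := fun pr =>
    (t₁ pr.1 + t₂ pr.2) * (pr.2 - mG) * (pr.1 - mA) * Real.exp (-(φg pr.2 * pr.1)) with hFdef
  have hZT : ∀ ω, (A ω, G ω) ∈ TA ×ˢ TG := fun ω => Finset.mem_product.2 ⟨hTA ω, hTG ω⟩
  have key := integral_of_finRange μ (hAm.prodMk hGm) hZT F
  have hgoal : (∫ ω, (t₁ (A ω) + t₂ (G ω)) * (G ω - mG) * (A ω - mA) *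
      Real.exp (-(φg (G ω) * A ω)) ∂μ) =
      ∑ pr ∈ TA ×ˢ TG, F pr * (μ {ω | (A ω, G ω) = pr}).toReal := key
  rw [hgoal]
  have hset : ∀ pr : ℝ × ℝ, {ω | (A ω, G ω) = pr} = {ω | A ω = pr.1 ∧ G ω = pr.2} := by
    intro pr; ext ω; simp [Prod.ext_iff]
  have hterm : ∀ pr : ℝ × ℝ, F pr * (μ {ω | (A ω, G ω) = pr}).toReal =
      c * p pr.1 * q pr.2 * (t₁ pr.1 + t₂ pr.2) * (pr.2 - mG) * (pr.1 - mA) := by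
    intro pr
    rw [hset pr, hpmf pr.1 pr.2]
    have : (t₁ pr.1 + t₂ pr.2) * (pr.2 - mG) * (pr.1 - mA) * Real.exp (-(φg pr.2 * pr.1)) *
        (c * p pr.1 * q pr.2 * Real.exp (φg pr.2 * pr.1)) =
        c * p pr.1 * q pr.2 * (t₁ pr.1 + t₂ pr.2) * (pr.2 - mG) * (pr.1 - mA) *
          (Real.exp (-(φg pr.2 * pr.1)) * Real.exp (φg pr.2 * pr.1)) := by ring
    rw [hFdef]
    simp only []
    rw [this, ← Real.exp_add, neg_add_cancel, Real.exp_zero, mul_one]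
  rw [Finset.sum_congr rfl fun pr _ => hterm pr, Finset.sum_product]
  have hinner : ∀ a : ℝ, ∑ g ∈ TG,
      c * p a * q g * (t₁ a + t₂ g) * (g - mG) * (a - mA) =
      (c * ∑ g ∈ TG, q g * t₂ g * (g - mG)) * (p a * (a - mA)) := by
    intro a
    have h1 : ∀ g, c * p a * q g * (t₁ a + t₂ g) * (g - mG) * (a - mA) =
        c * p a * (a - mA) * (t₁ a * (q g * (g - mG)) + q g * t₂ g * (g - mG)) := by
      intro g; ring
    rw [Finset.sum_congr rfl fun g _ => h1 g, ← Finset.mul_sum, Finset.sum_add_distrib,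
      ← Finset.mul_sum, s2, mul_zero, zero_add]
    ring
  rw [Finset.sum_congr rfl fun a _ => hinner a, ← Finset.mul_sum, s3, mul_zero]
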